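/- For n ≥ 3, there exists a synchronizing basic DFA on n states with 5 symbols whose shortest synchronizing word has length exactly n^2 - 3n + 2; hence d(n,5) ≥ n^2 - 3n + 2. -/

import Mathlib

/-- `w` is a synchronizing word for the DFA with transition function `δ`. -/
def IsSyncWord {n k : ℕ} (δ : Fin k → Fin n → Fin n) (w : List (Fin k)) : Prop :=
  ∃ qs : Fin n, ∀ q : Fin n, w.foldl (fun s x => δ x s) q = qs

/-- The DFA is basic: distinct symbols act differently and no symbol is the identity. -/
def IsBasic {n k : ℕ} (δ : Fin k → Fin n → Fin n) : Prop :=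
  Function.Injective δ ∧ ∀ x : Fin k, δ x ≠ id

/-- Length of a shortest synchronizing word of the DFA `δ`. -/
noncomputable def shortestSync {n k : ℕ} (δ : Fin k → Fin n → Fin n) : ℕ :=
  sInf {L | ∃ w : List (Fin k), IsSyncWord δ w ∧ w.length = L}

/-- `d(n,k)`: the maximal shortest synchronizing word length over all synchronizing
basic DFAs with `n` states and `k` symbols. -/
noncomputable def dBound (n k : ℕ) : ℕ :=
  sSup {L | ∃ δ : Fin k → Fin n → Fin n,
    IsBasic δ ∧ (∃ w, IsSyncWord δ w) ∧ shortestSync δ = L}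

/- The symbols of the automaton `A`, on `Fin n` (state `i+1` of `{1,...,n}` is index `i`,
and `n+1` is interpreted as `1`, i.e. addition is cyclic). -/
def mapA (n : ℕ) [NeZero n] : Fin n → Fin n := fun q => q + 1
def mapB (n : ℕ) [NeZero n] : Fin n → Fin n := fun q =>
  if q = 0 then 0 else if q = 1 then 2 else if q = 2 then 2 else q
def mapC (n : ℕ) [NeZero n] : Fin n → Fin n := fun q =>
  if q = 0 then 2 else if q = 1 then 2 else q + 1
def mapD (n : ℕ) [NeZero n] : Fin n → Fin n := fun q =>
  if q = 0 then 1 else if q = 1 then 3 else if q = 2 then 3 else q + 1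
def mapE (n : ℕ) [NeZero n] : Fin n → Fin n := fun q =>
  if q = 0 then 2 else if q = 1 then 3 else if q = 2 then 3 else q + 1

/-- The DFA `A` with the five symbols `a, b, c, d, e`. -/
def deltaA (n : ℕ) [NeZero n] : Fin 5 → Fin n → Fin n :=
  ![mapA n, mapB n, mapC n, mapD n, mapE n]

/-! ### Lifted dynamics on ℕ -/

/-- base shift of each letter -/
def betaF : Fin 5 → ℕ := fun x => if x = 1 then 0 else 1

/-- extra shift of each letter, as a function of the current residue mod `n` -/
def extF : Fin 5 → ℕ → ℕ := fun x r =>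
  if x = 0 then 0
  else if x = 1 then (if r = 1 then 1 else 0)
  else if x = 2 then (if r = 0 then 1 else 0)
  else if x = 3 then (if r = 1 then 1 else 0)
  else (if r = 0 ∨ r = 1 then 1 else 0)

def stepN (n : ℕ) (x : Fin 5) (P : ℕ) : ℕ := P + betaF x + extF x (P % n)

def liftF (n : ℕ) (w : List (Fin 5)) (P : ℕ) : ℕ := w.foldl (fun P x => stepN n x P) P

def extSum (n : ℕ) : List (Fin 5) → ℕ → ℕ
  | [], _ => 0
  | x :: w, P => extF x (P % n) + extSum n w (stepN n x P)

def betaSum (w : List (Fin 5)) : ℕ := (w.map betaF).sum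

@[simp] lemma liftF_nil (n P : ℕ) : liftF n [] P = P := rfl
@[simp] lemma liftF_cons (n : ℕ) (x : Fin 5) (w : List (Fin 5)) (P : ℕ) :
    liftF n (x :: w) P = liftF n w (stepN n x P) := rfl
lemma liftF_append (n : ℕ) (w₁ w₂ : List (Fin 5)) (P : ℕ) :
    liftF n (w₁ ++ w₂) P = liftF n w₂ (liftF n w₁ P) := by
  simp [liftF, List.foldl_append]

lemma liftF_eq (n : ℕ) (w : List (Fin 5)) (P : ℕ) :
    liftF n w P = P + betaSum w + extSum n w P := by
  induction w generalizing P with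
  | nil => simp [betaSum, extSum]
  | cons x w ih =>
    rw [liftF_cons, ih, extSum]
    simp only [betaSum, List.map_cons, List.sum_cons, stepN]
    ring

lemma betaSum_le (w : List (Fin 5)) : betaSum w ≤ w.length := by
  induction w with
  | nil => simp [betaSum]
  | cons x w ih =>
    simp only [betaSum, List.map_cons, List.sum_cons, List.length_cons] at *
    have : betaF x ≤ 1 := by unfold betaF; split <;> omega
    omega

section Main
variable {n : ℕ} [NeZero n]
open Fin.NatCast Fin.CommRing

lemma npos : 0 < n := Nat.pos_of_ne_zero (NeZero.ne n)

lemma cast_one_eq : ((1:ℕ) : Fin n) = 1 := by norm_cast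
lemma cast_two_eq : ((2:ℕ) : Fin n) = 2 := by norm_cast
lemma cast_eq_one (hn : 3 ≤ n) {P : ℕ} (h : P % n = 1) : ((P:ℕ) : Fin n) = 1 := by
  rw [← cast_one_eq, Fin.ext_iff, Fin.val_natCast, Fin.val_natCast, h,
    Nat.mod_eq_of_lt (by omega)]
lemma cast_eq_two (hn : 3 ≤ n) {P : ℕ} (h : P % n = 2) : ((P:ℕ) : Fin n) = 2 := by
  rw [← cast_two_eq, Fin.ext_iff, Fin.val_natCast, Fin.val_natCast, h,
    Nat.mod_eq_of_lt (by omega)]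
lemma cast_eq_zero {P : ℕ} (h : P % n = 0) : ((P:ℕ) : Fin n) = 0 := by
  rw [Fin.ext_iff, Fin.val_natCast, h]; rfl
lemma cast_ne_one (hn : 3 ≤ n) {P : ℕ} (h : P % n ≠ 1) : ((P:ℕ) : Fin n) ≠ 1 := by
  rw [← cast_one_eq, Ne, Fin.ext_iff, Fin.val_natCast, Fin.val_natCast,
    Nat.mod_eq_of_lt (show 1 < n by omega)]
  exact h
lemma cast_ne_two (hn : 3 ≤ n) {P : ℕ} (h : P % n ≠ 2) : ((P:ℕ) : Fin n) ≠ 2 := by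
  rw [← cast_two_eq, Ne, Fin.ext_iff, Fin.val_natCast, Fin.val_natCast,
    Nat.mod_eq_of_lt (show 2 < n by omega)]
  exact h
lemma cast_ne_zero' {P : ℕ} (h : P % n ≠ 0) : ((P:ℕ) : Fin n) ≠ 0 := by
  rw [Ne, Fin.ext_iff, Fin.val_natCast]; simpa using h


lemma val_two' : ((2 : Fin n) : ℕ) = 2 % n := by
  simp only [OfNat.ofNat, Fin.ofNat_eq_cast, Fin.val_natCast]
lemma val_three' : ((3 : Fin n) : ℕ) = 3 % n := by
  simp only [OfNat.ofNat, Fin.ofNat_eq_cast, Fin.val_natCast]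

/-- Compatibility: the lifted ℕ dynamics projects to the Fin dynamics. -/
lemma step_cast (hn : 3 ≤ n) (x : Fin 5) (P : ℕ) :
    ((stepN n x P : ℕ) : Fin n) = deltaA n x ((P : ℕ) : Fin n) := by
  fin_cases x
  · -- a
    show ((P + 1 + 0 : ℕ) : Fin n) = mapA n _
    simp only [mapA]
    push_cast
    ring
  · -- b
    show ((P + 0 + (if P % n = 1 then 1 else 0) : ℕ) : Fin n) = mapB n _
    rcases eq_or_ne (P % n) 0 with h0 | h0
    · rw [if_neg (by omega : ¬ P % n = 1)]
      simp only [mapB, if_pos (cast_eq_zero h0)]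
      simpa using cast_eq_zero h0
    rcases eq_or_ne (P % n) 1 with h1 | h1
    · rw [if_pos h1]
      simp only [mapB, if_neg (cast_ne_zero' h0), if_pos (cast_eq_one hn h1)]
      apply Fin.ext
      rw [Fin.val_natCast, val_two', show P + 0 + 1 = P + 1 by omega, ← Nat.mod_add_mod, h1]
    rcases eq_or_ne (P % n) 2 with h2 | h2
    · rw [if_neg h1]
      simp only [mapB, if_neg (cast_ne_zero' h0), if_neg (cast_ne_one hn h1),
        if_pos (cast_eq_two hn h2)]
      simpa using cast_eq_two hn h2
    · rw [if_neg h1]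
      simp only [mapB, if_neg (cast_ne_zero' h0), if_neg (cast_ne_one hn h1),
        if_neg (cast_ne_two hn h2)]
      simp
  · -- c
    show ((P + 1 + (if P % n = 0 then 1 else 0) : ℕ) : Fin n) = mapC n _
    rcases eq_or_ne (P % n) 0 with h0 | h0
    · rw [if_pos h0]
      simp only [mapC, if_pos (cast_eq_zero h0)]
      apply Fin.ext
      rw [Fin.val_natCast, val_two', show P + 1 + 1 = P + 2 by omega, ← Nat.mod_add_mod, h0]
    rcases eq_or_ne (P % n) 1 with h1 | h1
    · rw [if_neg h0]
      simp only [mapC, if_neg (cast_ne_zero' h0), if_pos (cast_eq_one hn h1)]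
      apply Fin.ext
      rw [Fin.val_natCast, val_two', show P + 1 + 0 = P + 1 by omega, ← Nat.mod_add_mod, h1]
    · rw [if_neg h0]
      simp only [mapC, if_neg (cast_ne_zero' h0), if_neg (cast_ne_one hn h1)]
      push_cast
      ring
  · -- d
    show ((P + 1 + (if P % n = 1 then 1 else 0) : ℕ) : Fin n) = mapD n _
    rcases eq_or_ne (P % n) 0 with h0 | h0
    · rw [if_neg (by omega : ¬ P % n = 1)]
      simp only [mapD, if_pos (cast_eq_zero h0)]
      apply Fin.ext
      rw [Fin.val_natCast, Fin.val_one', show P + 1 + 0 = P + 1 by omega, ← Nat.mod_add_mod, h0]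
    rcases eq_or_ne (P % n) 1 with h1 | h1
    · rw [if_pos h1]
      simp only [mapD, if_neg (cast_ne_zero' h0), if_pos (cast_eq_one hn h1)]
      apply Fin.ext
      rw [Fin.val_natCast, val_three', show P + 1 + 1 = P + 2 by omega, ← Nat.mod_add_mod, h1]
    rcases eq_or_ne (P % n) 2 with h2 | h2
    · rw [if_neg h1]
      simp only [mapD, if_neg (cast_ne_zero' h0), if_neg (cast_ne_one hn h1),
        if_pos (cast_eq_two hn h2)]
      apply Fin.ext
      rw [Fin.val_natCast, val_three', show P + 1 + 0 = P + 1 by omega, ← Nat.mod_add_mod, h2]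
    · rw [if_neg h1]
      simp only [mapD, if_neg (cast_ne_zero' h0), if_neg (cast_ne_one hn h1),
        if_neg (cast_ne_two hn h2)]
      push_cast
      ring
  · -- e
    show ((P + 1 + (if P % n = 0 ∨ P % n = 1 then 1 else 0) : ℕ) : Fin n) = mapE n _
    rcases eq_or_ne (P % n) 0 with h0 | h0
    · rw [if_pos (Or.inl h0)]
      simp only [mapE, if_pos (cast_eq_zero h0)]
      apply Fin.ext
      rw [Fin.val_natCast, val_two', show P + 1 + 1 = P + 2 by omega, ← Nat.mod_add_mod, h0]
    rcases eq_or_ne (P % n) 1 with h1 | h1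
    · rw [if_pos (Or.inr h1)]
      simp only [mapE, if_neg (cast_ne_zero' h0), if_pos (cast_eq_one hn h1)]
      apply Fin.ext
      rw [Fin.val_natCast, val_three', show P + 1 + 1 = P + 2 by omega, ← Nat.mod_add_mod, h1]
    rcases eq_or_ne (P % n) 2 with h2 | h2
    · rw [if_neg (show ¬ (P % n = 0 ∨ P % n = 1) by tauto)]
      simp only [mapE, if_neg (cast_ne_zero' h0), if_neg (cast_ne_one hn h1),
        if_pos (cast_eq_two hn h2)]
      apply Fin.ext
      rw [Fin.val_natCast, val_three', show P + 1 + 0 = P + 1 by omega, ← Nat.mod_add_mod, h2]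
    · rw [if_neg (show ¬ (P % n = 0 ∨ P % n = 1) by tauto)]
      simp only [mapE, if_neg (cast_ne_zero' h0), if_neg (cast_ne_one hn h1),
        if_neg (cast_ne_two hn h2)]
      push_cast
      ring

lemma lift_cast (hn : 3 ≤ n) (w : List (Fin 5)) (P : ℕ) :
    ((liftF n w P : ℕ) : Fin n) = w.foldl (fun s x => deltaA n x s) ((P : ℕ) : Fin n) := by
  induction w generalizing P with
  | nil => rfl
  | cons x w ih =>
    rw [liftF_cons, List.foldl_cons, ih, step_cast hn]

/-! ### The potential function and the per-step invariant -/

/-- potential of a residue -/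
def chiF (n r : ℕ) : ℕ := if r = 1 then 0 else if r = 0 then 1 else n + 1 - r

lemma chiF_le (hn : 3 ≤ n) {r : ℕ} (hr : r < n) : chiF n r ≤ n - 1 := by
  unfold chiF; split_ifs <;> first | contradiction | omega

lemma chiF_succ (hn : 3 ≤ n) {r : ℕ} (hr : r < n) : chiF n r ≤ 1 + chiF n ((r + 1) % n) := by
  rcases eq_or_lt_of_le (Nat.succ_le_of_lt hr) with h | h
  · rw [show r + 1 = n from h, Nat.mod_self]
    unfold chiF
    split_ifs <;> first | contradiction | omega
  · rw [Nat.mod_eq_of_lt h]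
    unfold chiF
    split_ifs <;> first | contradiction | omega

lemma chiF_three (hn : 3 ≤ n) : chiF n (3 % n) = n - 2 := by
  rcases eq_or_lt_of_le hn with h | h
  · rw [← h]
    decide
  · rw [Nat.mod_eq_of_lt h]
    unfold chiF
    split_ifs <;> first | contradiction | omega

lemma step_inv (hn : 3 ≤ n) (x : Fin 5) (P : ℕ) :
    P + chiF n (P % n) + n * extF x (P % n) ≤ stepN n x P + chiF n (stepN n x P % n) := by
  have hr : P % n < n := Nat.mod_lt _ npos
  have hsucc : ∀ Q : ℕ, Q + chiF n (Q % n) ≤ (Q + 1) + chiF n ((Q + 1) % n) := by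
    intro Q
    have h2 : (Q + 1) % n = (Q % n + 1) % n := by rw [Nat.mod_add_mod]
    have := chiF_succ hn (Nat.mod_lt Q (npos (n := n)))
    rw [h2]
    omega
  fin_cases x
  · -- a
    show P + chiF n (P % n) + n * 0 ≤ (P + 1 + 0) + chiF n ((P + 1 + 0) % n)
    have := hsucc P
    simp only [Nat.add_zero, Nat.mul_zero]
    omega
  · -- b
    show P + chiF n (P % n) + n * (if P % n = 1 then 1 else 0)
        ≤ (P + 0 + (if P % n = 1 then 1 else 0))
          + chiF n ((P + 0 + (if P % n = 1 then 1 else 0)) % n)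
    rcases eq_or_ne (P % n) 1 with h1 | h1
    · rw [if_pos h1]
      have h2 : (P + 0 + 1) % n = 2 := by
        rw [show P + 0 + 1 = P + 1 by omega, ← Nat.mod_add_mod, h1, Nat.mod_eq_of_lt (by omega)]
      rw [h2, h1]
      unfold chiF
      split_ifs <;> first | contradiction | omega
    · rw [if_neg h1]
      simp only [Nat.add_zero]
      omega
  · -- c
    show P + chiF n (P % n) + n * (if P % n = 0 then 1 else 0)
        ≤ (P + 1 + (if P % n = 0 then 1 else 0))
          + chiF n ((P + 1 + (if P % n = 0 then 1 else 0)) % n)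
    rcases eq_or_ne (P % n) 0 with h0 | h0
    · rw [if_pos h0]
      have h2 : (P + 1 + 1) % n = 2 := by
        rw [show P + 1 + 1 = P + 2 by omega, ← Nat.mod_add_mod, h0, Nat.mod_eq_of_lt (by omega)]
      rw [h2, h0]
      unfold chiF
      split_ifs <;> first | contradiction | omega
    · rw [if_neg h0]
      simp only [Nat.add_zero]
      have := hsucc P
      omega
  · -- d
    show P + chiF n (P % n) + n * (if P % n = 1 then 1 else 0)
        ≤ (P + 1 + (if P % n = 1 then 1 else 0))
          + chiF n ((P + 1 + (if P % n = 1 then 1 else 0)) % n)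
    rcases eq_or_ne (P % n) 1 with h1 | h1
    · rw [if_pos h1]
      have h2 : (P + 1 + 1) % n = 3 % n := by
        rw [show P + 1 + 1 = P + 2 by omega, ← Nat.mod_add_mod, h1]
      rw [h2, h1, chiF_three hn]
      unfold chiF
      split_ifs <;> first | contradiction | omega
    · rw [if_neg h1]
      simp only [Nat.add_zero]
      have := hsucc P
      omega
  · -- e
    show P + chiF n (P % n) + n * (if P % n = 0 ∨ P % n = 1 then 1 else 0)
        ≤ (P + 1 + (if P % n = 0 ∨ P % n = 1 then 1 else 0))
          + chiF n ((P + 1 + (if P % n = 0 ∨ P % n = 1 then 1 else 0)) % n)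
    rcases eq_or_ne (P % n) 0 with h0 | h0
    · rw [if_pos (Or.inl h0)]
      have h2 : (P + 1 + 1) % n = 2 := by
        rw [show P + 1 + 1 = P + 2 by omega, ← Nat.mod_add_mod, h0, Nat.mod_eq_of_lt (by omega)]
      rw [h2, h0]
      unfold chiF
      split_ifs <;> first | contradiction | omega
    rcases eq_or_ne (P % n) 1 with h1 | h1
    · rw [if_pos (Or.inr h1)]
      have h2 : (P + 1 + 1) % n = 3 % n := by
        rw [show P + 1 + 1 = P + 2 by omega, ← Nat.mod_add_mod, h1]
      rw [h2, h1, chiF_three hn]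
      unfold chiF
      split_ifs <;> first | contradiction | omega
    · rw [if_neg (show ¬ (P % n = 0 ∨ P % n = 1) by tauto)]
      simp only [Nat.add_zero]
      have := hsucc P
      omega

lemma main_inv (hn : 3 ≤ n) (w : List (Fin 5)) (P : ℕ) :
    P + chiF n (P % n) + n * extSum n w P ≤ liftF n w P + chiF n (liftF n w P % n) := by
  induction w generalizing P with
  | nil => simp [extSum]
  | cons x w ih =>
    rw [liftF_cons, extSum, Nat.mul_add]
    have h1 := step_inv hn x P
    have h2 := ih (stepN n x P)
    omega

/-! ### The lower bound -/

lemma lift_le_len (w : List (Fin 5)) (P : ℕ) :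
    liftF n w P ≤ P + w.length + extSum n w P := by
  have h := liftF_eq n w P
  have h2 := betaSum_le w
  omega

lemma lower_bound (hn : 3 ≤ n) (w : List (Fin 5)) (hsync : IsSyncWord (deltaA n) w) :
    (n - 1) * (n - 2) ≤ w.length := by
  obtain ⟨f, hf⟩ := hsync
  set B : ℕ := betaSum w with hB
  set q0 : Fin n := f + 1 - (B : Fin n) with hq0
  set P0 : ℕ := q0.val with hP0
  set E : ℕ := extSum n w P0 with hE
  have hlift : ((liftF n w P0 : ℕ) : Fin n) = f := by
    rw [lift_cast hn, Fin.cast_val_eq_self]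
    exact hf q0
  have heq : liftF n w P0 = P0 + B + E := liftF_eq n w P0
  have hcast : ((P0 + B + E : ℕ) : Fin n) = f := by rw [← heq, hlift]
  have hEf : ((E + 1 : ℕ) : Fin n) = 0 := by
    push_cast at hcast ⊢
    rw [Fin.cast_val_eq_self] at hcast
    rw [hq0] at hcast
    linear_combination hcast
  have hdvd : n ∣ E + 1 := by
    rwa [Fin.natCast_eq_zero] at hEf
  have hEn : n - 1 ≤ E := by
    have := Nat.le_of_dvd (by omega) hdvd
    omega
  -- combine the invariant with the step bound
  have hinv := main_inv hn w P0
  have hlen := lift_le_len (n := n) w P0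
  have hchi1 : chiF n (liftF n w P0 % n) ≤ n - 1 := chiF_le hn (Nat.mod_lt _ npos)
  have hi1 : P0 + n * E ≤ P0 + chiF n (P0 % n) + n * E :=
    Nat.add_le_add_right (Nat.le_add_right _ _) _
  have hi3 : liftF n w P0 + chiF n (liftF n w P0 % n)
      ≤ (P0 + w.length + E) + (n - 1) := Nat.add_le_add hlen hchi1
  have hi4 : P0 + n * E ≤ P0 + (w.length + E + (n - 1)) := by
    refine le_trans hi1 (le_trans hinv (le_trans hi3 (le_of_eq ?_)))
    ring
  have hi5 : n * E ≤ w.length + E + (n - 1) := Nat.le_of_add_le_add_left hi4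
  have hsplit : n * E = (n - 1) * E + E := by
    have h1 : E ≤ n * E := Nat.le_mul_of_pos_left E (by omega)
    rw [Nat.sub_one_mul]
    omega
  have hi6 : (n - 1) * E ≤ w.length + (n - 1) := by omega
  have hi7 : (n - 1) * (n - 1) ≤ (n - 1) * E := Nat.mul_le_mul_left _ hEn
  have hi8 : (n - 1) * (n - 1) = (n - 1) * (n - 2) + (n - 1) := by
    calc (n - 1) * (n - 1) = (n - 1) * ((n - 2) + 1) := by rw [show (n-2)+1 = n-1 by omega]
    _ = (n - 1) * (n - 2) + (n - 1) := by rw [Nat.mul_succ]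
  omega

/-! ### The upper bound: an explicit synchronizing word -/

def roundW (n : ℕ) : List (Fin 5) := 3 :: List.replicate (n - 2) 0

def roundsW (n : ℕ) : ℕ → List (Fin 5)
  | 0 => []
  | k + 1 => roundW n ++ roundsW n k

def tailW (n : ℕ) : List (Fin 5) := 3 :: (List.replicate (n - 3) 0 ++ [2])

def bigW (n : ℕ) : List (Fin 5) := roundsW n (n - 3) ++ tailW n

lemma stepN_a (P : ℕ) : stepN n 0 P = P + 1 := rfl

lemma stepN_d (P : ℕ) : stepN n 3 P = P + 1 + (if P % n = 1 then 1 else 0) := rfl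

lemma stepN_c (P : ℕ) : stepN n 2 P = P + 1 + (if P % n = 0 then 1 else 0) := rfl

lemma lift_rep_a (k P : ℕ) : liftF n (List.replicate k 0) P = P + k := by
  induction k generalizing P with
  | zero => simp
  | succ k ih =>
    rw [List.replicate_succ, liftF_cons, stepN_a, ih]
    omega

lemma lift_round (P : ℕ) :
    liftF n (roundW n) P = P + 1 + (if P % n = 1 then 1 else 0) + (n - 2) := by
  show liftF n (List.replicate (n - 2) 0) (stepN n 3 P) = _
  rw [lift_rep_a, stepN_d]

lemma round_res (hn : 3 ≤ n) (P : ℕ) (h1 : 1 ≤ P % n) :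
    liftF n (roundW n) P % n = max 1 (P % n - 1) := by
  have hP : P % n < n := Nat.mod_lt _ npos
  rw [lift_round]
  rcases eq_or_ne (P % n) 1 with h | h
  · rw [if_pos h, show P + 1 + 1 + (n - 2) = P + n by omega, Nat.add_mod_right, h]
    omega
  · rw [if_neg h, show P + 1 + 0 + (n - 2) = P + (n - 1) by omega, ← Nat.mod_add_mod,
      show P % n + (n - 1) = (P % n - 1) + n by omega, Nat.add_mod_right,
      Nat.mod_eq_of_lt (by omega)]
    omega

lemma rounds_res (hn : 3 ≤ n) (k : ℕ) (P : ℕ) (h1 : 1 ≤ P % n) :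
    liftF n (roundsW n k) P % n = max 1 (P % n - k) := by
  induction k generalizing P with
  | zero => show P % n = _ ; omega
  | succ k ih =>
    show liftF n (roundW n ++ roundsW n k) P % n = _
    rw [liftF_append, ih _ (by rw [round_res hn _ h1]; omega), round_res hn _ h1]
    omega

lemma three_mod_ne_one (hn : 3 ≤ n) : 3 % n ≠ 1 := by
  rcases eq_or_lt_of_le hn with h | h
  · rw [← h]
    omega
  · rw [Nat.mod_eq_of_lt h]
    omega

lemma tail_res (hn : 3 ≤ n) (P : ℕ) (h : P % n = 1 ∨ P % n = 2 ∨ P % n = 3 % n) :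
    liftF n (tailW n) P % n = 2 := by
  have hstep : liftF n (tailW n) P
      = stepN n 2 (liftF n (List.replicate (n - 3) 0) (stepN n 3 P)) := by
    show liftF n (List.replicate (n - 3) 0 ++ [2]) (stepN n 3 P) = _
    rw [liftF_append]
    rfl
  rcases h with h1 | h2 | h3
  · -- P % n = 1
    have hY : (P + 2 + (n - 3)) % n = 0 := by
      rw [show P + 2 + (n - 3) = P + (n - 1) by omega, ← Nat.mod_add_mod, h1,
        show 1 + (n - 1) = n by omega, Nat.mod_self]
    rw [hstep, stepN_d, if_pos h1, lift_rep_a, stepN_c, if_pos hY,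
      show P + 1 + 1 + (n - 3) + 1 + 1 = (P + 2 + (n - 3)) + 2 by omega,
      ← Nat.mod_add_mod, hY, Nat.mod_eq_of_lt (by omega)]
  · -- P % n = 2
    have hY : (P + 1 + (n - 3)) % n = 0 := by
      rw [show P + 1 + (n - 3) = P + (n - 2) by omega, ← Nat.mod_add_mod, h2,
        show 2 + (n - 2) = n by omega, Nat.mod_self]
    rw [hstep, stepN_d, if_neg (by omega : ¬ P % n = 1), lift_rep_a, stepN_c, if_pos hY,
      show P + 1 + 0 + (n - 3) + 1 + 1 = (P + 1 + (n - 3)) + 2 by omega,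
      ← Nat.mod_add_mod, hY, Nat.mod_eq_of_lt (by omega)]
  · -- P % n = 3 % n
    have hne1 : P % n ≠ 1 := by rw [h3]; exact three_mod_ne_one hn
    have hY : (P + 1 + (n - 3)) % n = 1 := by
      rw [show P + 1 + (n - 3) = P + (n - 2) by omega, ← Nat.mod_add_mod, h3,
        Nat.mod_add_mod, show 3 + (n - 2) = n + 1 by omega, Nat.add_comm n 1,
        Nat.add_mod_right, Nat.mod_eq_of_lt (by omega)]
    have hY' : ¬ (P + 1 + 0 + (n - 3)) % n = 0 := by
      rw [show P + 1 + 0 + (n - 3) = P + 1 + (n - 3) by omega, hY]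
      omega
    rw [hstep, stepN_d, if_neg hne1, lift_rep_a, stepN_c, if_neg hY',
      show P + 1 + 0 + (n - 3) + 1 + 0 = (P + 1 + (n - 3)) + 1 by omega,
      ← Nat.mod_add_mod, hY, Nat.mod_eq_of_lt (by omega)]

lemma big_res (hn : 3 ≤ n) (P : ℕ) : liftF n (bigW n) P % n = 2 := by
  have hP : P % n < n := Nat.mod_lt _ npos
  rw [bigW, liftF_append]
  rcases Nat.eq_zero_or_pos (P % n) with h0 | h1
  · -- P % n = 0
    rcases eq_or_lt_of_le hn with h3 | h4
    · -- n = 3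
      have : n - 3 = 0 := by omega
      rw [this]
      apply tail_res hn
      right; right
      rw [show liftF n (roundsW n 0) P = P from rfl, h0, ← h3]
    · -- 4 ≤ n
      have hsplit : n - 3 = (n - 4) + 1 := by omega
      rw [hsplit]
      show liftF n (tailW n) (liftF n (roundW n ++ roundsW n (n-4)) P) % n = 2
      rw [liftF_append]
      have hx : liftF n (roundW n) P % n = n - 1 := by
        rw [lift_round, if_neg (by omega : ¬ P % n = 1),
          show P + 1 + 0 + (n - 2) = P + (n - 1) by omega,
          ← Nat.mod_add_mod, h0, Nat.mod_eq_of_lt (by omega)]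
        omega
      apply tail_res hn
      right; right
      rw [rounds_res hn _ _ (by omega), hx, Nat.mod_eq_of_lt (by omega : 3 < n)]
      omega
  · -- 1 ≤ P % n
    have := rounds_res hn (n - 3) P h1
    apply tail_res hn
    have hle : P % n - (n - 3) ≤ 2 := by omega
    rcases Nat.lt_or_ge (P % n - (n-3)) 2 with hc | hc
    · left; omega
    · right; left; omega

lemma val_two_eq (hn : 3 ≤ n) : ((2 : Fin n) : ℕ) = 2 := by
  rw [val_two', Nat.mod_eq_of_lt (by omega)]

lemma big_sync (hn : 3 ≤ n) : IsSyncWord (deltaA n) (bigW n) := by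
  refine ⟨2, fun q => ?_⟩
  have h := lift_cast hn (bigW n) q.val
  rw [Fin.cast_val_eq_self] at h
  rw [← h]
  apply Fin.ext
  rw [Fin.val_natCast, big_res hn, val_two_eq hn]

lemma roundsW_len (k : ℕ) : (roundsW n k).length = k * ((roundW n).length) := by
  induction k with
  | zero => simp [roundsW]
  | succ k ih =>
    show (roundW n ++ roundsW n k).length = _
    rw [List.length_append, ih, Nat.succ_mul]
    omega

lemma bigW_len (hn : 3 ≤ n) : (bigW n).length = (n - 1) * (n - 2) := by
  have h1 : (roundW n).length = n - 1 := by
    simp [roundW]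
    omega
  have h2 : (tailW n).length = n - 1 := by
    simp [tailW]
    omega
  rw [bigW, List.length_append, roundsW_len, h1, h2,
    show (n - 1) * (n - 2) = (n - 1) * ((n - 3) + 1) by rw [show (n-3)+1 = n-2 by omega],
    Nat.mul_succ, Nat.mul_comm]

/-! ### Basicness and final assembly -/

lemma fne10 (hn : 3 ≤ n) : (1 : Fin n) ≠ 0 := by
  rw [Ne, Fin.ext_iff, Fin.val_one', Fin.val_zero, Nat.mod_eq_of_lt (by omega)]
  omega

lemma fne12 (hn : 3 ≤ n) : (1 : Fin n) ≠ 2 := by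
  rw [Ne, Fin.ext_iff, Fin.val_one', val_two_eq hn, Nat.mod_eq_of_lt (by omega)]
  omega

lemma fne02 (hn : 3 ≤ n) : (0 : Fin n) ≠ 2 := by
  rw [Ne, Fin.ext_iff, Fin.val_zero, val_two_eq hn]
  omega

lemma fne23 (hn : 3 ≤ n) : (2 : Fin n) ≠ 3 := by
  rw [Ne, Fin.ext_iff, val_two_eq hn, val_three']
  rcases eq_or_lt_of_le hn with h | h
  · rw [← h]
    omega
  · rw [Nat.mod_eq_of_lt h]
    omega

lemma vA0 : mapA n 0 = 1 := zero_add 1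
lemma vA1 : mapA n 1 = 2 := by simp only [mapA]; exact one_add_one_eq_two
lemma vB0 : mapB n 0 = 0 := by simp [mapB]
lemma vB1 (hn : 3 ≤ n) : mapB n 1 = 2 := by simp [mapB, fne10 hn]
lemma vC0 : mapC n 0 = 2 := by simp [mapC]
lemma vC1 (hn : 3 ≤ n) : mapC n 1 = 2 := by simp [mapC, fne10 hn]
lemma vD0 : mapD n 0 = 1 := by simp [mapD]
lemma vD1 (hn : 3 ≤ n) : mapD n 1 = 3 := by simp [mapD, fne10 hn]
lemma vE0 : mapE n 0 = 2 := by simp [mapE]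
lemma vE1 (hn : 3 ≤ n) : mapE n 1 = 3 := by simp [mapE, fne10 hn]

lemma basicA (hn : 3 ≤ n) : IsBasic (deltaA n) := by
  constructor
  · intro x y h
    fin_cases x <;> fin_cases y <;> try rfl
    -- a,b
    · exact absurd (vA0 (n := n) ▸ vB0 (n := n) ▸ congrFun h 0) (fne10 hn)
    -- a,c
    · exact absurd (vA0 (n := n) ▸ vC0 (n := n) ▸ congrFun h 0) (fne12 hn)
    -- a,d
    · exact absurd (vA1 (n := n) ▸ vD1 hn ▸ congrFun h 1) (fne23 hn)
    -- a,e
    · exact absurd (vA0 (n := n) ▸ vE0 (n := n) ▸ congrFun h 0) (fne12 hn)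
    -- b,a
    · exact absurd (vB0 (n := n) ▸ vA0 (n := n) ▸ congrFun h 0) (Ne.symm (fne10 hn))
    -- b,c
    · exact absurd (vB0 (n := n) ▸ vC0 (n := n) ▸ congrFun h 0) (fne02 hn)
    -- b,d
    · exact absurd (vB0 (n := n) ▸ vD0 (n := n) ▸ congrFun h 0) (Ne.symm (fne10 hn))
    -- b,e
    · exact absurd (vB0 (n := n) ▸ vE0 (n := n) ▸ congrFun h 0) (fne02 hn)
    -- c,a
    · exact absurd (vC0 (n := n) ▸ vA0 (n := n) ▸ congrFun h 0) (Ne.symm (fne12 hn))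
    -- c,b
    · exact absurd (vC0 (n := n) ▸ vB0 (n := n) ▸ congrFun h 0) (Ne.symm (fne02 hn))
    -- c,d
    · exact absurd (vC0 (n := n) ▸ vD0 (n := n) ▸ congrFun h 0) (Ne.symm (fne12 hn))
    -- c,e
    · exact absurd (vC1 hn ▸ vE1 hn ▸ congrFun h 1) (fne23 hn)
    -- d,a
    · exact absurd (vD1 hn ▸ vA1 (n := n) ▸ congrFun h 1) (Ne.symm (fne23 hn))
    -- d,b
    · exact absurd (vD0 (n := n) ▸ vB0 (n := n) ▸ congrFun h 0) (fne10 hn)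
    -- d,c
    · exact absurd (vD0 (n := n) ▸ vC0 (n := n) ▸ congrFun h 0) (fne12 hn)
    -- d,e
    · exact absurd (vD0 (n := n) ▸ vE0 (n := n) ▸ congrFun h 0) (fne12 hn)
    -- e,a
    · exact absurd (vE0 (n := n) ▸ vA0 (n := n) ▸ congrFun h 0) (Ne.symm (fne12 hn))
    -- e,b
    · exact absurd (vE0 (n := n) ▸ vB0 (n := n) ▸ congrFun h 0) (Ne.symm (fne02 hn))
    -- e,c
    · exact absurd (vE1 hn ▸ vC1 hn ▸ congrFun h 1) (Ne.symm (fne23 hn))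
    -- e,d
    · exact absurd (vE0 (n := n) ▸ vD0 (n := n) ▸ congrFun h 0) (Ne.symm (fne12 hn))
  · intro x h
    fin_cases x
    · exact absurd (vA0 (n := n) ▸ congrFun h 0) (fne10 hn)
    · exact absurd (vB1 hn ▸ congrFun h 1) (Ne.symm (fne12 hn))
    · exact absurd (vC0 (n := n) ▸ congrFun h 0) (Ne.symm (fne02 hn))
    · exact absurd (vD0 (n := n) ▸ congrFun h 0) (fne10 hn)
    · exact absurd (vE0 (n := n) ▸ congrFun h 0) (Ne.symm (fne02 hn))

lemma sq_eq (hn : 3 ≤ n) : n ^ 2 - 3 * n + 2 = (n - 1) * (n - 2) := by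
  obtain ⟨m, rfl⟩ : ∃ m, n = m + 3 := ⟨n - 3, by omega⟩
  have e1 : (m + 3) ^ 2 = m * m + 6 * m + 9 := by ring
  have e2 : (m + 2) * (m + 1) = m * m + 3 * m + 2 := by ring
  rw [e1, show m + 3 - 1 = m + 2 by omega, show m + 3 - 2 = m + 1 by omega, e2]
  omega

lemma shortest_eq (hn : 3 ≤ n) : shortestSync (deltaA n) = n ^ 2 - 3 * n + 2 := by
  rw [sq_eq hn]
  have hmem : (n - 1) * (n - 2) ∈
      {L | ∃ w : List (Fin 5), IsSyncWord (deltaA n) w ∧ w.length = L} :=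
    ⟨bigW n, big_sync hn, bigW_len hn⟩
  refine le_antisymm (Nat.sInf_le hmem) (le_csInf ⟨_, hmem⟩ ?_)
  rintro L ⟨w, hw, rfl⟩
  exact lower_bound hn w hw

end Main


/-- for n ≥ 3, the DFA `A` is a synchronizing basic DFA on `n` states with
5 symbols whose shortest synchronizing word has length exactly `n² - 3n + 2`;
hence `d(n,5) ≥ n² - 3n + 2`. -/
theorem dBound_five (n : ℕ) (hn : 3 ≤ n) [NeZero n] :
    IsBasic (deltaA n) ∧ (∃ w, IsSyncWord (deltaA n) w) ∧
    shortestSync (deltaA n) = n ^ 2 - 3 * n + 2 ∧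
    n ^ 2 - 3 * n + 2 ≤ dBound n 5 := by
  refine ⟨basicA hn, ⟨bigW n, big_sync hn⟩, shortest_eq hn, ?_⟩
  have hbdd : BddAbove {L | ∃ δ : Fin 5 → Fin n → Fin n,
      IsBasic δ ∧ (∃ w, IsSyncWord δ w) ∧ shortestSync δ = L} := by
    apply Set.Finite.bddAbove
    apply Set.Finite.subset (Set.finite_range (shortestSync (n := n) (k := 5)))
    rintro L ⟨δ, _, _, h⟩
    exact ⟨δ, h⟩
  exact le_csSup hbdd ⟨deltaA n, basicA hn, ⟨bigW n, big_sync hn⟩, shortest_eq hn⟩
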